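/- Let G : ℝ → ℝ be measurable and let α, β be real numbers with α > β ≥ 0. Assume that the function t ↦ |G(t)|/(e^{αt} − e^{βt}) is integrable on (0, ∞). Then the series ∑'_{k=1}^∞ ∫₀^∞ e^{−(αk − β(k−1))t} G(t) dt converges and equals ∫₀^∞ G(t)/(e^{αt} − e^{βt}) dt. -/

import Mathlib

open MeasureTheory Real Set

lemma key_hasSum (α β t : ℝ) (hαβ : β < α) (ht : 0 < t) :
    HasSum (fun k : ℕ => Real.exp (-((α * (k + 1) - β * k) * t)))
      (1 / (Real.exp (α * t) - Real.exp (β * t))) := by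
  have hr0 : (0:ℝ) ≤ Real.exp (-((α - β) * t)) := (Real.exp_pos _).le
  have hr1 : Real.exp (-((α - β) * t)) < 1 := by
    rw [Real.exp_lt_one_iff]
    nlinarith
  have h := (hasSum_geometric_of_lt_one hr0 hr1).mul_left (Real.exp (-(α * t)))
  have hD : Real.exp (β * t) < Real.exp (α * t) := Real.exp_lt_exp.mpr (by nlinarith)
  have hDne : Real.exp (α * t) - Real.exp (β * t) ≠ 0 := by linarith
  have h1 : 1 - Real.exp (-((α - β) * t))
      = Real.exp (-(α * t)) * (Real.exp (α * t) - Real.exp (β * t)) := by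
    rw [mul_sub, ← Real.exp_add, ← Real.exp_add]
    ring_nf
    rw [Real.exp_zero]
    ring
  have hval : Real.exp (-(α * t)) * (1 - Real.exp (-((α - β) * t)))⁻¹
      = 1 / (Real.exp (α * t) - Real.exp (β * t)) := by
    rw [h1, mul_inv, ← mul_assoc, mul_inv_cancel₀ (Real.exp_ne_zero _), one_mul, one_div]
  rw [hval] at h
  convert h using 2 with k
  case e'_3 => rfl
  rw [← Real.exp_nat_mul, ← Real.exp_add]
  ring_nf

/-- Added constant parameter series: for `α > β ≥ 0`,
`∑_{k≥1} ∫₀^∞ e^{-(αk - β(k-1))t} G(t) dt` converges to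
`∫₀^∞ G(t)/(e^{αt} - e^{βt}) dt`. -/
theorem added_parameter_series_eq_integral (G : ℝ → ℝ) (hG : Measurable G) (α β : ℝ)
    (hβ : 0 ≤ β) (hαβ : β < α)
    (hint : IntegrableOn (fun t => |G t| / (Real.exp (α * t) - Real.exp (β * t))) (Ioi 0)) :
    HasSum (fun k : ℕ =>
        ∫ t in Ioi 0, Real.exp (-((α * (k + 1) - β * k) * t)) * G t)
      (∫ t in Ioi 0, G t / (Real.exp (α * t) - Real.exp (β * t))) := by
  set F : ℕ → ℝ → ℝ := fun k t => Real.exp (-((α * (k + 1) - β * k) * t)) * G t with hF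
  have hDpos : ∀ t ∈ Ioi (0:ℝ), 0 < Real.exp (α * t) - Real.exp (β * t) := by
    intro t ht
    have : Real.exp (β * t) < Real.exp (α * t) :=
      Real.exp_lt_exp.mpr (by have := mem_Ioi.mp ht; nlinarith)
    linarith
  -- pointwise bound for each term k
  have hterm_le : ∀ k : ℕ, ∀ t ∈ Ioi (0:ℝ),
      Real.exp (-((α * (k + 1) - β * k) * t)) ≤ 1 / (Real.exp (α * t) - Real.exp (β * t)) := by
    intro k t ht
    exact le_hasSum (key_hasSum α β t hαβ (mem_Ioi.mp ht)) k (fun j _ => (Real.exp_pos _).le)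
  have hmeas : ∀ k : ℕ, AEStronglyMeasurable (F k) (volume.restrict (Ioi 0)) := by
    intro k
    exact ((Real.measurable_exp.comp (measurable_id.const_mul _).neg).mul hG).aestronglyMeasurable
  have hint_k : ∀ k : ℕ, IntegrableOn (F k) (Ioi 0) := by
    intro k
    refine Integrable.mono hint (hmeas k) ?_
    filter_upwards [ae_restrict_mem measurableSet_Ioi] with t ht
    have h1 := hterm_le k t ht
    have h2 := hDpos t ht
    rw [Real.norm_eq_abs, Real.norm_eq_abs, abs_mul, abs_of_pos (Real.exp_pos _),
      abs_of_nonneg (div_nonneg (abs_nonneg _) h2.le)]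
    calc Real.exp (-((α * (k + 1) - β * k) * t)) * |G t|
        ≤ (1 / (Real.exp (α * t) - Real.exp (β * t))) * |G t| :=
          mul_le_mul_of_nonneg_right h1 (abs_nonneg _)
      _ = |G t| / (Real.exp (α * t) - Real.exp (β * t)) := by ring
  have hsum_norm : Summable fun k : ℕ => ∫ t in Ioi 0, ‖F k t‖ := by
    apply summable_of_sum_range_le
      (c := ∫ t in Ioi 0, |G t| / (Real.exp (α * t) - Real.exp (β * t)))
    · intro k
      exact integral_nonneg fun t => norm_nonneg _
    · intro n
      rw [← integral_finset_sum _ (fun k _ => (hint_k k).norm)]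
      apply setIntegral_mono_on ((integrable_finset_sum _ (fun k _ => (hint_k k).norm)))
        hint measurableSet_Ioi
      intro t ht
      have h2 := hDpos t ht
      have hsum := key_hasSum α β t hαβ (mem_Ioi.mp ht)
      have hpart : ∑ k ∈ Finset.range n, Real.exp (-((α * (k + 1) - β * k) * t))
          ≤ 1 / (Real.exp (α * t) - Real.exp (β * t)) :=
        sum_le_hasSum _ (fun j _ => (Real.exp_pos _).le) hsum
      calc ∑ k ∈ Finset.range n, ‖F k t‖
          = (∑ k ∈ Finset.range n, Real.exp (-((α * (k + 1) - β * k) * t))) * |G t| := by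
            rw [Finset.sum_mul]
            refine Finset.sum_congr rfl fun k _ => ?_
            rw [Real.norm_eq_abs, abs_mul, abs_of_pos (Real.exp_pos _)]
        _ ≤ (1 / (Real.exp (α * t) - Real.exp (β * t))) * |G t| :=
            mul_le_mul_of_nonneg_right hpart (abs_nonneg _)
        _ = |G t| / (Real.exp (α * t) - Real.exp (β * t)) := by ring
  have hmain := hasSum_integral_of_summable_integral_norm hint_k hsum_norm
  have heq : ∫ t in Ioi 0, (∑' k, F k t)
      = ∫ t in Ioi 0, G t / (Real.exp (α * t) - Real.exp (β * t)) := by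
    apply setIntegral_congr_fun measurableSet_Ioi
    intro t ht
    have hsum := (key_hasSum α β t hαβ (mem_Ioi.mp ht)).mul_right (G t)
    have htt : (∑' k, F k t) = 1 / (Real.exp (α * t) - Real.exp (β * t)) * G t := hsum.tsum_eq
    show (∑' k, F k t) = G t / (Real.exp (α * t) - Real.exp (β * t))
    rw [htt]; ring
  rwa [heq] at hmain
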